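/- If L is a self-centralizing Lie algebra possessing an ideal of dimension 1, then dim(L) ≤ 2. -/

import Mathlib

/-- The centralizer of an element of a Lie algebra, as a submodule. -/
def lieCentralizer (k : Type) {L : Type} [Field k] [LieRing L] [LieAlgebra k L]
    (l : L) : Submodule k L where
  carrier := {x | ⁅l, x⁆ = 0}
  add_mem' := by
    intro a b ha hb
    simp only [Set.mem_setOf_eq] at *
    rw [lie_add, ha, hb, add_zero]
  zero_mem' := by simp
  smul_mem' := by
    intro c x hx
    simp only [Set.mem_setOf_eq] at *
    rw [lie_smul, hx, smul_zero]

/-- If a self-centralizing Lie algebra has an ideal of dimension 1, then `dim L ≤ 2`. -/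
theorem stmt4 {k L : Type} [Field k] [CharZero k] [LieRing L] [LieAlgebra k L]
    (hsc : ∀ l : L, l ≠ 0 → Module.rank k (lieCentralizer k l) = 1)
    (I : LieIdeal k L) [Module.Finite k I] (hdim : Module.finrank k I = 1) :
    Module.rank k L ≤ 2 := by
  -- pick a nonzero element e of I
  obtain ⟨e, he0⟩ : ∃ e : I, (e : L) ≠ 0 := by
    have : Nontrivial I := Module.nontrivial_of_finrank_pos (R := k) (by omega)
    obtain ⟨e, he⟩ := exists_ne (0 : I)
    exact ⟨e, fun h => he (Subtype.ext h)⟩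
  -- the map x ↦ ⁅x, e⁆, valued in I
  let f : L →ₗ[k] I :=
    { toFun := fun x => ⟨⁅x, (e : L)⁆, I.lie_mem e.2⟩
      map_add' := fun a b => by ext; simp [add_lie]
      map_smul' := fun c x => by ext; simp [smul_lie] }
  have hker : LinearMap.ker f = lieCentralizer k (e : L) := by
    ext x
    constructor
    · intro hx
      have : ⁅x, (e : L)⁆ = 0 := congrArg Subtype.val (LinearMap.mem_ker.mp hx)
      show ⁅(e : L), x⁆ = 0
      rw [← lie_skew, this, neg_zero]
    · intro hx
      have hx' : ⁅(e : L), x⁆ = 0 := hx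
      refine LinearMap.mem_ker.mpr (Subtype.ext ?_)
      show ⁅x, (e : L)⁆ = 0
      rw [← lie_skew, hx', neg_zero]
  have hrankI : Module.rank k I = 1 := by
    rw [← Module.finrank_eq_rank k I, hdim, Nat.cast_one]
  have h1 : Module.rank k (LinearMap.range f) ≤ 1 := by
    rw [← hrankI]
    exact Submodule.rank_le _
  have h2 : Module.rank k (LinearMap.ker f) = 1 := by
    rw [hker]; exact hsc _ he0
  have := LinearMap.rank_range_add_rank_ker f
  calc Module.rank k L = Module.rank k (LinearMap.range f) +
        Module.rank k (LinearMap.ker f) := this.symm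
    _ ≤ 1 + 1 := by rw [h2]; exact add_le_add_left h1 1
    _ = 2 := one_add_one_eq_two
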